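/- (Zlotnik's inequality.) Let T > 0, let g : ℝ → ℝ be continuous, and let y, b : ℝ → ℝ be differentiable at every point of [0,T] with y'(t) = g(y(t)) + b'(t) for every t ∈ [0,T]. Assume there are constants N₀ ≥ 0 and N₁ ≥ 0 such that b(t₂) − b(t₁) ≤ N₀ + N₁ (t₂ − t₁) for all t₁, t₂ with 0 ≤ t₁ < t₂ ≤ T, and assume there is ζ̄ ∈ ℝ such that g(ζ) ≤ −N₁ for every ζ ≥ ζ̄. Then y(t) ≤ max{y(0), ζ̄} + N₀ for every t ∈ [0,T]. -/

import Mathlib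

/-- **Zlotnik's inequality.** If `y' = g(y) + b'` on `[0, T]`, the increments of `b`
satisfy `b t₂ - b t₁ ≤ N₀ + N₁ (t₂ - t₁)`, and `g ζ ≤ -N₁` for all `ζ ≥ ζbar`, then
`y t ≤ max (y 0) ζbar + N₀` on `[0, T]`. -/
theorem zlotnik_inequality
    (T : ℝ) (hT : 0 < T)
    (g : ℝ → ℝ) (hg : Continuous g)
    (y b : ℝ → ℝ) (y' b' : ℝ → ℝ)
    (hy : ∀ t ∈ Set.Icc (0 : ℝ) T, HasDerivAt y (y' t) t)
    (hb : ∀ t ∈ Set.Icc (0 : ℝ) T, HasDerivAt b (b' t) t)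
    (hode : ∀ t ∈ Set.Icc (0 : ℝ) T, y' t = g (y t) + b' t)
    (N₀ N₁ : ℝ) (hN₀ : 0 ≤ N₀) (hN₁ : 0 ≤ N₁)
    (hbineq : ∀ t₁ t₂ : ℝ, 0 ≤ t₁ → t₁ < t₂ → t₂ ≤ T →
      b t₂ - b t₁ ≤ N₀ + N₁ * (t₂ - t₁))
    (ζbar : ℝ) (hζ : ∀ ζ : ℝ, ζbar ≤ ζ → g ζ ≤ -N₁) :
    ∀ t ∈ Set.Icc (0 : ℝ) T, y t ≤ max (y 0) ζbar + N₀ := by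
  intro t ht
  set M : ℝ := max (y 0) ζbar with hM
  by_contra hcon
  push_neg at hcon
  obtain ⟨ht0, htT⟩ := ht
  have hyM : y 0 ≤ M := le_max_left _ _
  have hζM : ζbar ≤ M := le_max_right _ _
  have hycont : ContinuousOn y (Set.Icc 0 t) := fun τ hτ =>
    (hy τ ⟨hτ.1, hτ.2.trans htT⟩).continuousAt.continuousWithinAt
  -- the set of times ≤ t where y ≤ M
  set S : Set ℝ := Set.Icc 0 t ∩ y ⁻¹' Set.Iic M with hS
  have hSclosed : IsClosed S := by
    have := ContinuousOn.preimage_isClosed_of_isClosed hycont isClosed_Icc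
      (isClosed_Iic (a := M))
    exact this
  have h0S : (0 : ℝ) ∈ S := ⟨⟨le_refl _, ht0⟩, hyM⟩
  have hSne : S.Nonempty := ⟨0, h0S⟩
  have hSbdd : BddAbove S := ⟨t, fun x hx => hx.1.2⟩
  set t₁ : ℝ := sSup S with ht₁def
  have ht₁S : t₁ ∈ S := hSclosed.csSup_mem hSne hSbdd
  have ht₁0 : 0 ≤ t₁ := ht₁S.1.1
  have ht₁t : t₁ ≤ t := ht₁S.1.2
  have hyt₁ : y t₁ ≤ M := ht₁S.2
  have ht₁lt : t₁ < t := by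
    rcases lt_or_eq_of_le ht₁t with h | h
    · exact h
    · exfalso; rw [h] at hyt₁; nlinarith [hcon]
  -- on (t₁, t], y > M
  have hgt : ∀ τ ∈ Set.Ioc t₁ t, M < y τ := by
    intro τ hτ
    by_contra hle
    push_neg at hle
    have : τ ∈ S := ⟨⟨ht₁0.trans hτ.1.le, hτ.2⟩, hle⟩
    exact absurd (le_csSup hSbdd this) (not_le.mpr hτ.1)
  -- auxiliary function
  set h : ℝ → ℝ := fun τ => y τ - b τ + N₁ * τ with hhdef
  have hmem : ∀ τ ∈ Set.Icc t₁ t, τ ∈ Set.Icc (0:ℝ) T := fun τ hτ =>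
    ⟨ht₁0.trans hτ.1, hτ.2.trans htT⟩
  have hderiv : ∀ τ ∈ Set.Icc (0:ℝ) T, HasDerivAt h (y' τ - b' τ + N₁) τ := by
    intro τ hτ
    have h1 : HasDerivAt (fun x : ℝ => N₁ * x) (N₁ * 1) τ :=
      (hasDerivAt_id τ).const_mul N₁
    exact (((hy τ hτ).sub (hb τ hτ)).add h1).congr_deriv (by ring)
  have hanti : AntitoneOn h (Set.Icc t₁ t) := by
    apply antitoneOn_of_deriv_nonpos (convex_Icc t₁ t)
    · intro τ hτ
      exact (hderiv τ (hmem τ hτ)).continuousAt.continuousWithinAt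
    · intro τ hτ
      rw [interior_Icc] at hτ
      exact (hderiv τ (hmem τ ⟨hτ.1.le, hτ.2.le⟩)).differentiableAt.differentiableWithinAt
    · intro τ hτ
      rw [interior_Icc] at hτ
      have hτT : τ ∈ Set.Icc (0:ℝ) T := hmem τ ⟨hτ.1.le, hτ.2.le⟩
      rw [(hderiv τ hτT).deriv, hode τ hτT]
      have : g (y τ) ≤ -N₁ := hζ _ (hζM.trans (hgt τ ⟨hτ.1, hτ.2.le⟩).le)
      linarith
  have hht : h t ≤ h t₁ :=
    hanti (Set.left_mem_Icc.mpr ht₁lt.le) (Set.right_mem_Icc.mpr ht₁lt.le) ht₁lt.le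
  have hb' : b t - b t₁ ≤ N₀ + N₁ * (t - t₁) := hbineq t₁ t ht₁0 ht₁lt htT
  simp only [hhdef] at hht
  nlinarith [hcon]
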